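/- If two families of ℂ-bilinear maps (C_j)_{j∈ℕ} and (C̃_j)_{j∈ℕ} are both asymptotic expansions for T, and T satisfies the norm-limit property, then C_j(f,g) = C̃_j(f,g) for all j ∈ ℕ and all f, g ∈ A. (Uniqueness part of the construction of the Berezin–Toeplitz star product.) -/
import Mathlib


open Filter Finset MeasureTheory

variable {X : Type*} [TopologicalSpace X] [CompactSpace X]
variable {H : ℕ → Type*} [∀ m, NormedAddCommGroup (H m)]
  [∀ m, InnerProductSpace ℂ (H m)] [∀ m, CompleteSpace (H m)]

/-- `T` satisfies the norm-limit property if `‖T^(m)(f)‖ → ‖f‖_∞` for every `f ∈ C(X, ℂ)`. -/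
def NormLimitProperty (T : ∀ m : ℕ, C(X, ℂ) →ₗ[ℂ] (H m →L[ℂ] H m)) : Prop :=
  ∀ f : C(X, ℂ), Tendsto (fun m : ℕ => ‖T m f‖) atTop (nhds ‖f‖)

/-- A family of ℂ-bilinear maps `C_j` is an asymptotic expansion for `T` if for all
`f, g` and every `N` there is `K ≥ 0` with
`‖T^(m)(f)·T^(m)(g) − ∑_{j<N} m^{−j} T^(m)(C_j(f,g))‖ ≤ K·m^{−N}` for all `m ≥ 1`. -/
def IsAsymptoticExpansion (T : ∀ m : ℕ, C(X, ℂ) →ₗ[ℂ] (H m →L[ℂ] H m))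
    (C : ℕ → C(X, ℂ) →ₗ[ℂ] C(X, ℂ) →ₗ[ℂ] C(X, ℂ)) : Prop :=
  ∀ (f g : C(X, ℂ)) (N : ℕ), ∃ K : ℝ, 0 ≤ K ∧ ∀ m : ℕ, 1 ≤ m →
    ‖T m f * T m g - ∑ j ∈ Finset.range N, ((m : ℂ)⁻¹) ^ j • T m (C j f g)‖
      ≤ K * ((m : ℝ)⁻¹) ^ N

/- STATEMENT 8: If two families of ℂ-bilinear maps (C_j) and (C̃_j) are both asymptotic
expansions for T, and T satisfies the norm-limit property, then C_j(f,g) = C̃_j(f,g)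
for all j ∈ ℕ and all f, g ∈ A = C(X, ℂ). -/

theorem asymptoticExpansion_unique
    (T : ∀ m : ℕ, C(X, ℂ) →ₗ[ℂ] (H m →L[ℂ] H m))
    (hT : NormLimitProperty T)
    (C C' : ℕ → C(X, ℂ) →ₗ[ℂ] C(X, ℂ) →ₗ[ℂ] C(X, ℂ))
    (hC : IsAsymptoticExpansion T C) (hC' : IsAsymptoticExpansion T C') :
    ∀ (j : ℕ) (f g : C(X, ℂ)), C j f g = C' j f g := by
  intro j
  induction j using Nat.strong_induction_on with
  | _ j IH =>
  intro f g
  obtain ⟨K, hK0, hK⟩ := hC f g (j + 1)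
  obtain ⟨K', hK'0, hK'⟩ := hC' f g (j + 1)
  set D : C(X, ℂ) := C j f g - C' j f g with hD
  have key : ∀ m : ℕ, 1 ≤ m → ‖T m D‖ ≤ (K + K') * (m : ℝ)⁻¹ := by
    intro m hm
    have hm0 : (0 : ℝ) < m := by exact_mod_cast hm
    have hsum : (∑ i ∈ Finset.range (j + 1), ((m : ℂ)⁻¹) ^ i • T m (C i f g))
        - (∑ i ∈ Finset.range (j + 1), ((m : ℂ)⁻¹) ^ i • T m (C' i f g))
        = ((m : ℂ)⁻¹) ^ j • T m D := by
      rw [← Finset.sum_sub_distrib, Finset.sum_eq_single j]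
      · simp [hD, map_sub, smul_sub]
      · intro i hi hij
        have hlt : i < j := lt_of_le_of_ne (Nat.lt_succ_iff.mp (Finset.mem_range.mp hi)) hij
        rw [IH i hlt f g]; simp
      · intro h; exact absurd (Finset.self_mem_range_succ j) h
    have h1 := hK m hm
    have h2 := hK' m hm
    have hbound : ‖((m : ℂ)⁻¹) ^ j • T m D‖ ≤ (K + K') * ((m : ℝ)⁻¹) ^ (j + 1) := by
      rw [← hsum]
      have heq : (∑ i ∈ Finset.range (j + 1), ((m : ℂ)⁻¹) ^ i • T m (C i f g))
          - (∑ i ∈ Finset.range (j + 1), ((m : ℂ)⁻¹) ^ i • T m (C' i f g))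
          = (T m f * T m g - ∑ i ∈ Finset.range (j + 1), ((m : ℂ)⁻¹) ^ i • T m (C' i f g))
          - (T m f * T m g - ∑ i ∈ Finset.range (j + 1), ((m : ℂ)⁻¹) ^ i • T m (C i f g)) := by
        abel
      rw [heq]
      calc _ ≤ ‖T m f * T m g - ∑ i ∈ Finset.range (j + 1), ((m : ℂ)⁻¹) ^ i • T m (C' i f g)‖
            + ‖T m f * T m g - ∑ i ∈ Finset.range (j + 1), ((m : ℂ)⁻¹) ^ i • T m (C i f g)‖ :=
          norm_sub_le _ _
        _ ≤ K' * ((m : ℝ)⁻¹) ^ (j + 1) + K * ((m : ℝ)⁻¹) ^ (j + 1) := add_le_add h2 h1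
        _ = (K + K') * ((m : ℝ)⁻¹) ^ (j + 1) := by ring
    have hnorm : ‖((m : ℂ)⁻¹) ^ j • T m D‖ = ((m : ℝ)⁻¹) ^ j * ‖T m D‖ := by
      rw [norm_smul, norm_pow, norm_inv, Complex.norm_natCast]
    rw [hnorm] at hbound
    have hpow : (0 : ℝ) < ((m : ℝ)⁻¹) ^ j := pow_pos (inv_pos.mpr hm0) j
    have : ((m : ℝ)⁻¹) ^ j * ‖T m D‖ ≤ ((m : ℝ)⁻¹) ^ j * ((K + K') * (m : ℝ)⁻¹) := by
      calc ((m : ℝ)⁻¹) ^ j * ‖T m D‖ ≤ (K + K') * ((m : ℝ)⁻¹) ^ (j + 1) := hbound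
        _ = ((m : ℝ)⁻¹) ^ j * ((K + K') * (m : ℝ)⁻¹) := by ring
    exact le_of_mul_le_mul_left this hpow
  have hlim0 : Tendsto (fun m : ℕ => ‖T m D‖) atTop (nhds 0) := by
    have hlimK : Tendsto (fun m : ℕ => (K + K') * (m : ℝ)⁻¹) atTop (nhds 0) := by
      have h : Tendsto (fun m : ℕ => ((m : ℝ))⁻¹) atTop (nhds 0) :=
        tendsto_inv_atTop_zero.comp tendsto_natCast_atTop_atTop
      simpa using h.const_mul (K + K')
    refine squeeze_zero' ?_ ?_ hlimK
    · exact Filter.Eventually.of_forall fun m => norm_nonneg _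
    · filter_upwards [Filter.eventually_ge_atTop 1] with m hm using key m hm
  have hD0 : ‖D‖ = 0 := tendsto_nhds_unique (hT D) hlim0
  have : D = 0 := norm_eq_zero.mp hD0
  exact sub_eq_zero.mp this
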